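/- arXiv:1712.03602 — 2 statements merged into one kernel-verified Lean document; each statement's English description precedes it below -/
import Mathlib

section
/- If θ and α are independent and each uniformly distributed on [0,π/2], then the random variable X = sin(θ)/cos(α), conditioned (restricted) to values in [0,1), has density h(x) = (4/(π²x))·log((1+x)/(1−x)) for 0 ≤ x < 1, up to the conditioning normalization; equivalently, the unconditioned X has density (2/(π²x))·log|(1+x)/(1−x)| on (0,∞). -/
open MeasureTheory Real Set intervalIntegral
open scoped ENNReal

set_option linter.unusedSectionVars false
set_option maxHeartbeats 1000000

/-- The uniform probability measure on the interval `[a,b]`. -/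
noncomputable def unif (a b : ℝ) : Measure ℝ :=
  (ENNReal.ofReal (b - a))⁻¹ • volume.restrict (Icc a b)


instance unif_sfinite (a b : ℝ) : SFinite (unif a b) := by
  unfold unif; infer_instance

/-- arcsine-type density -/
noncomputable def aDen : ℝ → ℝ≥0∞ :=
  (Ioo (0:ℝ) 1).indicator fun s => ENNReal.ofReal (2 / (π * Real.sqrt (1 - s^2)))

lemma measurable_g2 : Measurable fun s : ℝ => ENNReal.ofReal (2 / (π * Real.sqrt (1 - s^2))) := by
  apply ENNReal.measurable_ofReal.comp
  exact measurable_const.div ((measurable_const.mul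
    (Real.continuous_sqrt.measurable.comp ((measurable_const.sub (measurable_id.pow_const 2))))))

lemma measurable_aDen : Measurable aDen :=
  measurable_g2.indicator measurableSet_Ioo

lemma aDen_ne_top (s : ℝ) : aDen s ≠ ⊤ := by
  unfold aDen
  by_cases h : s ∈ Ioo (0:ℝ) 1 <;> simp [h]

lemma aDen_of_nonpos {s : ℝ} (hs : s ≤ 0) : aDen s = 0 := by
  unfold aDen
  rw [indicator_of_notMem]
  simp only [mem_Ioo, not_and_or, not_lt]
  exact Or.inl hs

/-- 1D change of variables for lintegrals. -/
lemma lintegral_image_1d {s : Set ℝ} {f f' : ℝ → ℝ} (hs : MeasurableSet s)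
    (hf' : ∀ x ∈ s, HasDerivWithinAt f (f' x) s x) (hf : InjOn f s) (g : ℝ → ℝ≥0∞) :
    ∫⁻ x in f '' s, g x = ∫⁻ x in s, ENNReal.ofReal |f' x| * g (f x) := by
  simpa only [ContinuousLinearMap.det_toSpanSingleton] using
    lintegral_image_eq_lintegral_abs_det_fderiv_mul volume hs
      (fun x hx => (hf' x hx).hasFDerivWithinAt) hf g

lemma sin_image : Real.sin '' Ioo 0 (π/2) = Ioo 0 1 := by
  ext x
  constructor
  · rintro ⟨θ, hθ, rfl⟩
    have hθπ : θ < π := lt_trans hθ.2 (by linarith [pi_pos])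
    refine ⟨Real.sin_pos_of_pos_of_lt_pi hθ.1 hθπ, ?_⟩
    have : Real.sin θ < Real.sin (π/2) := Real.strictMonoOn_sin
      ⟨by linarith [pi_pos, hθ.1], le_of_lt hθ.2⟩ ⟨by linarith [pi_pos], le_refl _⟩ hθ.2
    simpa [Real.sin_pi_div_two] using this
  · intro hx
    refine ⟨Real.arcsin x, ⟨Real.arcsin_pos.2 hx.1, Real.arcsin_lt_pi_div_two.2 hx.2⟩,
      Real.sin_arcsin (by linarith [hx.1]) (le_of_lt hx.2)⟩

lemma cos_image : Real.cos '' Ioo 0 (π/2) = Ioo 0 1 := by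
  ext x
  constructor
  · rintro ⟨θ, hθ, rfl⟩
    refine ⟨Real.cos_pos_of_mem_Ioo ⟨by linarith [pi_pos, hθ.1], hθ.2⟩, ?_⟩
    have : Real.cos θ < Real.cos 0 := Real.strictAntiOn_cos
      ⟨le_refl _, by linarith [pi_pos]⟩ ⟨le_of_lt hθ.1, by linarith [pi_pos, hθ.2]⟩ hθ.1
    simpa [Real.cos_zero] using this
  · intro hx
    refine ⟨Real.arccos x, ⟨?_, Real.arccos_lt_pi_div_two.2 hx.1⟩,
      Real.cos_arccos (by linarith [hx.1]) (le_of_lt hx.2)⟩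
    exact Real.arccos_pos.2 hx.2


lemma map_unif_eq {f f' : ℝ → ℝ} (hmeas : Measurable f)
    (hder : ∀ θ ∈ Ioo 0 (π/2), HasDerivWithinAt f (f' θ) (Ioo 0 (π/2)) θ)
    (hinj : InjOn f (Ioo 0 (π/2)))
    (himg : f '' Ioo 0 (π/2) = Ioo 0 1)
    (habs : ∀ θ ∈ Ioo 0 (π/2), |f' θ| = Real.sqrt (1 - f θ ^ 2)) :
    Measure.map f (unif 0 (π/2)) = volume.withDensity aDen := by
  have hπ : (0:ℝ) < π/2 := by positivity
  ext A hA
  have hre : unif 0 (π/2) = (ENNReal.ofReal (π/2))⁻¹ • volume.restrict (Ioo 0 (π/2)) := by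
    unfold unif
    rw [Measure.restrict_congr_set Ioo_ae_eq_Icc, sub_zero]
  rw [hre, Measure.map_smul, Measure.smul_apply, Measure.map_apply hmeas hA,
    Measure.restrict_apply (hmeas hA), withDensity_apply _ hA]
  have key : ∫⁻ x in Ioo (0:ℝ) 1,
      A.indicator (fun y => ENNReal.ofReal (1 / Real.sqrt (1 - y^2))) x
      = volume (f ⁻¹' A ∩ Ioo 0 (π/2)) := by
    rw [← himg, lintegral_image_1d measurableSet_Ioo hder hinj]
    have hpt : ∀ θ ∈ Ioo 0 (π/2),
        ENNReal.ofReal |f' θ| *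
          A.indicator (fun y => ENNReal.ofReal (1 / Real.sqrt (1 - y^2))) (f θ)
        = (f ⁻¹' A).indicator (fun _ => (1:ℝ≥0∞)) θ := by
      intro θ hθ
      have hfθ : f θ ∈ Ioo (0:ℝ) 1 := himg ▸ mem_image_of_mem f hθ
      have hs : 0 < Real.sqrt (1 - f θ ^ 2) := by
        apply Real.sqrt_pos.2
        nlinarith [hfθ.1, hfθ.2]
      by_cases hfA : f θ ∈ A
      · rw [indicator_of_mem hfA, indicator_of_mem (mem_preimage.2 hfA), habs θ hθ,
          ← ENNReal.ofReal_mul (Real.sqrt_nonneg _), mul_one_div, div_self (ne_of_gt hs),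
          ENNReal.ofReal_one]
      · rw [indicator_of_notMem hfA, indicator_of_notMem (by simpa using hfA), mul_zero]
    rw [setLIntegral_congr_fun measurableSet_Ioo hpt,
      lintegral_indicator (hmeas hA), Measure.restrict_restrict (hmeas hA),
      setLIntegral_one]
  rw [← key]
  have hA2 : ∫⁻ x in A, aDen x
      = ∫⁻ x in Ioo (0:ℝ) 1, A.indicator
          (fun s => ENNReal.ofReal (2 / (π * Real.sqrt (1 - s^2)))) x := by
    unfold aDen
    rw [lintegral_indicator measurableSet_Ioo, lintegral_indicator hA,
      Measure.restrict_restrict measurableSet_Ioo, Measure.restrict_restrict hA,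
      inter_comm]
  rw [hA2, smul_eq_mul, ← lintegral_const_mul' _ _ (by simp [pi_pos] : (ENNReal.ofReal (π/2))⁻¹ ≠ ⊤)]
  apply setLIntegral_congr_fun measurableSet_Ioo
  intro x hx
  beta_reduce
  by_cases hxA : x ∈ A
  · rw [indicator_of_mem hxA, indicator_of_mem hxA, ← ENNReal.ofReal_inv_of_pos hπ,
      ← ENNReal.ofReal_mul (inv_nonneg.2 (le_of_lt hπ))]
    congr 1
    rw [inv_div, div_mul_div_comm, mul_one]
  · rw [indicator_of_notMem hxA, indicator_of_notMem hxA, mul_zero]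

lemma map_sin_unif' :
    ∀ θ ∈ Ioo 0 (π/2), |Real.cos θ| = Real.sqrt (1 - Real.sin θ ^ 2) := by
  intro θ _
  rw [← Real.cos_sq', Real.sqrt_sq_eq_abs]

lemma map_cos_unif' :
    ∀ θ ∈ Ioo 0 (π/2), |(-Real.sin θ)| = Real.sqrt (1 - Real.cos θ ^ 2) := by
  intro θ _
  rw [← Real.sin_sq, Real.sqrt_sq_eq_abs, abs_neg]

lemma injOn_sin' : InjOn Real.sin (Ioo 0 (π/2)) :=
  Real.injOn_sin.mono fun x hx => by
    rw [mem_Ioo] at hx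
    exact mem_Icc.2 ⟨by linarith [pi_pos, hx.1], le_of_lt hx.2⟩

lemma injOn_cos' : InjOn Real.cos (Ioo 0 (π/2)) :=
  Real.injOn_cos.mono fun x hx => by
    rw [mem_Ioo] at hx
    exact mem_Icc.2 ⟨le_of_lt hx.1, by linarith [pi_pos, hx.2]⟩

/-- scaling substitution -/
lemma lintegral_scale {g : ℝ → ℝ≥0∞} (hg : Measurable g) {c : ℝ} (hc : 0 < c) :
    ∫⁻ s, g s = ENNReal.ofReal c * ∫⁻ x, g (c * x) := by
  have h1 : Measure.map (fun x : ℝ => c * x) volume = ENNReal.ofReal c⁻¹ • volume := by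
    rw [Real.map_volume_mul_left (ne_of_gt hc), abs_of_pos (inv_pos.2 hc)]
  calc ∫⁻ s, g s
      = ENNReal.ofReal c * (ENNReal.ofReal c⁻¹ * ∫⁻ s, g s) := by
        rw [← mul_assoc, ← ENNReal.ofReal_mul (le_of_lt hc), mul_inv_cancel₀ (ne_of_gt hc),
          ENNReal.ofReal_one, one_mul]
    _ = ENNReal.ofReal c * ∫⁻ s, g s ∂(ENNReal.ofReal c⁻¹ • volume) := by
        rw [lintegral_smul_measure, smul_eq_mul]
    _ = ENNReal.ofReal c * ∫⁻ x, g (c * x) := by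
        rw [← h1, lintegral_map hg (measurable_const_mul c)]

/-- product of densities -/
lemma withDensity_prod {f g : ℝ → ℝ≥0∞} (hf : Measurable f) (hg : Measurable g) :
    (volume.withDensity f).prod (volume.withDensity g) =
      ((volume : Measure ℝ).prod volume).withDensity (fun p => f p.1 * g p.2) := by
  have hD : Measurable fun p : ℝ × ℝ => f p.1 * g p.2 :=
    (hf.comp measurable_fst).mul (hg.comp measurable_snd)
  ext S hS
  rw [Measure.prod_apply hS, withDensity_apply _ hS, ← lintegral_indicator hS,
    lintegral_prod _ (hD.indicator hS).aemeasurable,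
    lintegral_withDensity_eq_lintegral_mul volume hf (measurable_measure_prodMk_left hS)]
  apply lintegral_congr
  intro x
  simp only [Pi.mul_apply]
  rw [withDensity_apply _ (measurable_prodMk_left hS),
    ← lintegral_indicator (measurable_prodMk_left hS),
    ← lintegral_const_mul (f x) (hg.indicator (measurable_prodMk_left hS))]
  apply lintegral_congr
  intro y
  by_cases h : (x, y) ∈ S
  · simp [Set.indicator_apply, Set.mem_preimage, h]
  · simp [Set.indicator_apply, Set.mem_preimage, h]

section Key

variable {x : ℝ} (hx : 0 < x) (hx1 : x ≠ 1)

noncomputable def psi (x c : ℝ) : ℝ :=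
  4/π^2 * (c / (Real.sqrt (1 - x^2*c^2) * Real.sqrt (1 - c^2)))

noncomputable def Phi (x c : ℝ) : ℝ :=
  -(4/(π^2*x)) * Real.log (Real.sqrt (1 - x^2*c^2) + x * Real.sqrt (1 - c^2))

include hx hx1

lemma hpos_sum : ∀ c ∈ Icc 0 (min 1 x⁻¹),
    0 < Real.sqrt (1 - x^2*c^2) + x * Real.sqrt (1 - c^2) := by
  intro c hc
  have hm1 : min 1 x⁻¹ ≤ 1 := min_le_left _ _
  by_cases hc1 : c < 1
  · have hA : 0 < Real.sqrt (1 - c^2) := Real.sqrt_pos.2 (by nlinarith [hc.1])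
    have := mul_pos hx hA
    positivity
  · have hc1' : c = 1 := le_antisymm (le_trans hc.2 hm1) (not_lt.1 hc1)
    have hxlt : x < 1 := by
      rcases lt_or_gt_of_ne hx1 with h | h
      · exact h
      · exfalso
        have h1 : x⁻¹ < 1 := inv_lt_one_of_one_lt₀ h
        have h2 : min 1 x⁻¹ ≤ x⁻¹ := min_le_right _ _
        have := hc.2
        rw [hc1'] at this
        linarith
    have hB : 0 < Real.sqrt (1 - x^2*c^2) := Real.sqrt_pos.2 (by
      rw [hc1']
      nlinarith [hx, hxlt])
    have := mul_nonneg (le_of_lt hx) (Real.sqrt_nonneg (1 - c^2))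
    linarith

lemma hcont_Phi : ContinuousOn (Phi x) (Icc 0 (min 1 x⁻¹)) := by
  apply ContinuousOn.mul continuousOn_const
  apply ContinuousOn.log
  · apply Continuous.continuousOn
    exact (Real.continuous_sqrt.comp (by continuity)).add
      (continuous_const.mul (Real.continuous_sqrt.comp (by continuity)))
  · exact fun c hc => ne_of_gt (hpos_sum hx hx1 c hc)

omit hx1 in
lemma hderiv_Phi : ∀ c ∈ Ioo 0 (min 1 x⁻¹), HasDerivAt (Phi x) (psi x c) c := by
  intro c hc
  have hm1 : min 1 x⁻¹ ≤ 1 := min_le_left _ _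
  have hmx : min 1 x⁻¹ ≤ x⁻¹ := min_le_right _ _
  have hc1 : c < 1 := lt_of_lt_of_le hc.2 hm1
  have hc2 : 0 < 1 - c^2 := by nlinarith [hc.1]
  have hxc : x*c < 1 := by
    have h1 : c < x⁻¹ := lt_of_lt_of_le hc.2 hmx
    calc x*c < x*x⁻¹ := by exact mul_lt_mul_of_pos_left h1 hx
    _ = 1 := mul_inv_cancel₀ (ne_of_gt hx)
  have hb2 : 0 < 1 - x^2*c^2 := by nlinarith [mul_pos hx hc.1]
  have hA0 : 0 < Real.sqrt (1 - c^2) := Real.sqrt_pos.2 hc2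
  have hB0 : 0 < Real.sqrt (1 - x^2*c^2) := Real.sqrt_pos.2 hb2
  have hAB : 0 < Real.sqrt (1 - x^2*c^2) + x * Real.sqrt (1 - c^2) := by positivity
  have d1 : HasDerivAt (fun c : ℝ => 1 - x^2*c^2) (-(x^2*(2*c))) c := by
    simpa using ((hasDerivAt_pow 2 c).const_mul (x^2)).const_sub 1
  have d1' : HasDerivAt (fun c : ℝ => 1 - c^2) (-(2*c)) c := by
    simpa using (hasDerivAt_pow 2 c).const_sub 1
  have d2 : HasDerivAt (fun c : ℝ => Real.sqrt (1 - x^2*c^2))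
      (1/(2*Real.sqrt (1 - x^2*c^2)) * (-(x^2*(2*c)))) c :=
    (Real.hasDerivAt_sqrt (ne_of_gt hb2)).comp c d1
  have d3 : HasDerivAt (fun c : ℝ => Real.sqrt (1 - c^2))
      (1/(2*Real.sqrt (1 - c^2)) * (-(2*c))) c :=
    (Real.hasDerivAt_sqrt (ne_of_gt hc2)).comp c d1'
  have d4 := d2.add (d3.const_mul x)
  have d5 := ((Real.hasDerivAt_log (ne_of_gt hAB)).comp c d4).const_mul (-(4/(π^2*x)))
  refine d5.congr_deriv ?_
  have hπ : π ≠ 0 := Real.pi_ne_zero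
  have hx0 : x ≠ 0 := ne_of_gt hx
  unfold psi
  field_simp
  ring


omit hx1 in
lemma psi_nonneg : ∀ c ∈ Ioo (0:ℝ) (min 1 x⁻¹), 0 ≤ psi x c := by
  intro c hc
  unfold psi
  have h4 : (0:ℝ) ≤ 4/π^2 := by positivity
  exact mul_nonneg h4 (div_nonneg (le_of_lt hc.1)
    (mul_nonneg (Real.sqrt_nonneg _) (Real.sqrt_nonneg _)))

lemma psi_integrableOn : IntegrableOn (psi x) (Ioc 0 (min 1 x⁻¹)) volume :=
  intervalIntegral.integrableOn_deriv_of_nonneg (hcont_Phi hx hx1)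
    (hderiv_Phi hx) (psi_nonneg hx)

lemma key_interval_value :
    ∫ c in (0:ℝ)..(min 1 x⁻¹), psi x c
      = 2 / (π^2 * x) * Real.log |(1 + x) / (1 - x)| := by
  have hm0 : 0 < min 1 x⁻¹ := lt_min one_pos (inv_pos.2 hx)
  rw [intervalIntegral.integral_eq_sub_of_hasDeriv_right_of_le (le_of_lt hm0)
    (hcont_Phi hx hx1) (fun c hc => (hderiv_Phi hx c hc).hasDerivWithinAt)
    ((intervalIntegrable_iff_integrableOn_Ioc_of_le (le_of_lt hm0)).2
      (psi_integrableOn hx hx1))]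
  have hπ : π ≠ 0 := Real.pi_ne_zero
  have hx0 : x ≠ 0 := ne_of_gt hx
  have hΦ0 : Phi x 0 = -(4/(π^2*x)) * Real.log (1 + x) := by
    unfold Phi
    norm_num
  rcases lt_or_gt_of_ne hx1 with hxl | hxg
  · -- x < 1
    have hm : min 1 x⁻¹ = 1 := min_eq_left (one_le_inv_iff₀.2 ⟨hx, le_of_lt hxl⟩)
    rw [hm, hΦ0]
    unfold Phi
    have h1 : Real.sqrt (1 - (1:ℝ)^2) = 0 := by norm_num
    have h2 : (1:ℝ) - x^2*1^2 = 1 - x^2 := by ring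
    rw [h1, h2, mul_zero, add_zero]
    have hx2 : (0:ℝ) < 1 - x^2 := by nlinarith
    have hlog : Real.log (Real.sqrt (1 - x^2)) = Real.log (1 - x^2) / 2 :=
      Real.log_sqrt (le_of_lt hx2)
    have hfac : (1:ℝ) - x^2 = (1+x)*(1-x) := by ring
    have habs : |(1 + x) / (1 - x)| = (1+x)/(1-x) :=
      abs_of_pos (div_pos (by linarith) (by linarith))
    rw [hlog, hfac, Real.log_mul (by linarith) (by linarith), habs,
      Real.log_div (by linarith) (by linarith)]
    ring
  · -- 1 < x
    have hm : min 1 x⁻¹ = x⁻¹ := min_eq_right (inv_le_one_of_one_le₀ (le_of_lt hxg))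
    rw [hm, hΦ0]
    unfold Phi
    have h1 : (1:ℝ) - x^2*(x⁻¹)^2 = 0 := by field_simp; ring
    have h2 : x * Real.sqrt (1 - (x⁻¹)^2) = Real.sqrt (x^2 - 1) := by
      rw [← Real.sqrt_sq (le_of_lt hx), ← Real.sqrt_mul (sq_nonneg x)]
      congr 1
      field_simp
      rw [Real.sq_sqrt (sq_nonneg x)]
    rw [h1, Real.sqrt_zero, zero_add, h2]
    have hx2 : (0:ℝ) < x^2 - 1 := by nlinarith
    have hlog : Real.log (Real.sqrt (x^2 - 1)) = Real.log (x^2 - 1) / 2 :=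
      Real.log_sqrt (le_of_lt hx2)
    have hfac : x^2 - 1 = (1+x)*(x-1) := by ring
    have habs : |(1 + x) / (1 - x)| = (1+x)/(x-1) := by
      rw [abs_div, abs_of_pos (by linarith : (0:ℝ) < 1 + x),
        abs_of_neg (by linarith : (1:ℝ) - x < 0)]
      ring_nf
    rw [hlog, hfac, Real.log_mul (by linarith) (by linarith), habs,
      Real.log_div (by linarith) (by linarith)]
    ring

end Key


noncomputable def Hd (x : ℝ) : ℝ≥0∞ :=
  ∫⁻ c in Ioo (0:ℝ) 1,
    aDen (c * x) * (ENNReal.ofReal c * ENNReal.ofReal (2 / (π * Real.sqrt (1 - c^2))))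

lemma Hd_nonpos {x : ℝ} (hx : ¬ 0 < x) : Hd x = 0 := by
  unfold Hd
  have h0 : ∀ c ∈ Ioo (0:ℝ) 1,
      aDen (c * x) * (ENNReal.ofReal c * ENNReal.ofReal (2 / (π * Real.sqrt (1 - c^2))))
        = 0 := by
    intro c hc
    have hcx : c * x ≤ 0 := mul_nonpos_of_nonneg_of_nonpos (le_of_lt hc.1) (not_lt.1 hx)
    rw [aDen_of_nonpos hcx, zero_mul]
  rw [setLIntegral_congr_fun measurableSet_Ioo h0]
  simp

lemma Hd_pos {x : ℝ} (hx : 0 < x) (hx1 : x ≠ 1) :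
    Hd x = ENNReal.ofReal (2 / (π^2 * x) * Real.log |(1 + x) / (1 - x)|) := by
  have hm0 : 0 < min 1 x⁻¹ := lt_min one_pos (inv_pos.2 hx)
  have hm1 : min 1 x⁻¹ ≤ 1 := min_le_left _ _
  have hπ : π ≠ 0 := Real.pi_ne_zero
  unfold Hd
  have step1 : ∀ c ∈ Ioo (0:ℝ) 1,
      aDen (c * x) * (ENNReal.ofReal c * ENNReal.ofReal (2 / (π * Real.sqrt (1 - c^2))))
        = (Ioo (0:ℝ) (min 1 x⁻¹)).indicator (fun c => ENNReal.ofReal (psi x c)) c := by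
    intro c hc
    by_cases hcm : c < x⁻¹
    · have hmem : c ∈ Ioo 0 (min 1 x⁻¹) := ⟨hc.1, lt_min hc.2 hcm⟩
      rw [indicator_of_mem hmem]
      have hcx1 : c * x < 1 := by
        have := mul_lt_mul_of_pos_right hcm hx
        rwa [inv_mul_cancel₀ (ne_of_gt hx)] at this
      have hcx : c * x ∈ Ioo (0:ℝ) 1 := ⟨mul_pos hc.1 hx, hcx1⟩
      unfold aDen
      rw [indicator_of_mem hcx]
      have hA0 : 0 < Real.sqrt (1 - c^2) := Real.sqrt_pos.2 (by nlinarith [hc.1, hc.2])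
      have hB0 : 0 < Real.sqrt (1 - (c*x)^2) :=
        Real.sqrt_pos.2 (by nlinarith [mul_pos hc.1 hx])
      have hn1 : (0:ℝ) ≤ 2 / (π * Real.sqrt (1 - (c*x)^2)) :=
        div_nonneg (by norm_num) (mul_nonneg (le_of_lt Real.pi_pos) (Real.sqrt_nonneg _))
      have hn2 : (0:ℝ) ≤ c := le_of_lt hc.1
      rw [← ENNReal.ofReal_mul hn2, ← ENNReal.ofReal_mul hn1]
      congr 1
      unfold psi
      have harg : 1 - (c*x)^2 = 1 - x^2*c^2 := by ring
      rw [harg] at hB0 ⊢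
      field_simp
      ring
    · have hmem : c ∉ Ioo 0 (min 1 x⁻¹) := fun h => hcm (lt_of_lt_of_le h.2 (min_le_right _ _))
      rw [indicator_of_notMem hmem]
      have hcx : c * x ∉ Ioo (0:ℝ) 1 := by
        intro h
        apply hcm
        have h1 : x⁻¹ * (c * x) < x⁻¹ * 1 := mul_lt_mul_of_pos_left h.2 (inv_pos.2 hx)
        calc c = x⁻¹ * (c * x) := by field_simp
        _ < x⁻¹ * 1 := h1
        _ = x⁻¹ := mul_one _
      unfold aDen
      rw [indicator_of_notMem hcx, zero_mul]
  rw [setLIntegral_congr_fun measurableSet_Ioo step1,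
    lintegral_indicator measurableSet_Ioo, Measure.restrict_restrict measurableSet_Ioo]
  have hss : Ioo 0 (min 1 x⁻¹) ∩ Ioo 0 1 = Ioo 0 (min 1 x⁻¹) :=
    inter_eq_left.2 (Ioo_subset_Ioo le_rfl hm1)
  rw [hss,
    ← ofReal_integral_eq_lintegral_ofReal
      ((psi_integrableOn hx hx1).mono_set Ioo_subset_Ioc_self)
      ((ae_restrict_iff' measurableSet_Ioo).2 (Filter.Eventually.of_forall (psi_nonneg hx)))]
  congr 1
  rw [← integral_Ioc_eq_integral_Ioo]
  have := key_interval_value hx hx1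
  rwa [intervalIntegral.integral_of_le (le_of_lt hm0)] at this

lemma indicator_one_ne_top {A : Set ℝ} (x : ℝ) :
    A.indicator (fun _ => (1:ℝ≥0∞)) x ≠ ⊤ := by
  by_cases h : x ∈ A <;> simp [h]

lemma map_div_eq :
    Measure.map (fun q : ℝ × ℝ => q.1 / q.2)
      (((volume : Measure ℝ).prod volume).withDensity (fun p => aDen p.1 * aDen p.2))
      = volume.withDensity Hd := by
  have hdiv : Measurable fun q : ℝ × ℝ => q.1 / q.2 := measurable_fst.div measurable_snd
  have hD : Measurable fun p : ℝ × ℝ => aDen p.1 * aDen p.2 :=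
    (measurable_aDen.comp measurable_fst).mul (measurable_aDen.comp measurable_snd)
  ext A hA
  rw [Measure.map_apply hdiv hA, withDensity_apply _ (hdiv hA), withDensity_apply _ hA,
    ← lintegral_indicator (hdiv hA)]
  rw [lintegral_prod_symm _ (hD.indicator (hdiv hA)).aemeasurable]
  have hrw1 : ∀ c : ℝ, ∀ s : ℝ,
      ((fun q : ℝ × ℝ => q.1 / q.2) ⁻¹' A).indicator (fun p => aDen p.1 * aDen p.2) (s, c)
        = aDen c * (A.indicator (fun _ => (1:ℝ≥0∞)) (s/c) * aDen s) := by
    intro c s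
    by_cases h : s / c ∈ A
    · rw [indicator_of_mem h,
        indicator_of_mem (show (s, c) ∈ (fun q : ℝ × ℝ => q.1 / q.2) ⁻¹' A from h)]
      simp only [one_mul]
      exact mul_comm _ _
    · rw [indicator_of_notMem h,
        indicator_of_notMem (show (s, c) ∉ (fun q : ℝ × ℝ => q.1 / q.2) ⁻¹' A from h),
        zero_mul, mul_zero]
  have hmeasJ : ∀ c : ℝ, Measurable fun s : ℝ =>
      A.indicator (fun _ => (1:ℝ≥0∞)) (s/c) * aDen s := by
    intro c
    exact ((measurable_const.indicator hA).comp (measurable_id.div_const c)).mul measurable_aDen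
  calc ∫⁻ c, ∫⁻ s,
        ((fun q : ℝ × ℝ => q.1 / q.2) ⁻¹' A).indicator (fun p => aDen p.1 * aDen p.2) (s, c)
          ∂volume ∂volume
      = ∫⁻ c, aDen c * ∫⁻ s, A.indicator (fun _ => (1:ℝ≥0∞)) (s/c) * aDen s ∂volume
          ∂volume := by
        apply lintegral_congr
        intro c
        rw [← lintegral_const_mul' _ _ (aDen_ne_top c)]
        exact lintegral_congr fun s => hrw1 c s
    _ = ∫⁻ c in Ioo (0:ℝ) 1, ENNReal.ofReal (2 / (π * Real.sqrt (1 - c^2))) *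
          ∫⁻ s, A.indicator (fun _ => (1:ℝ≥0∞)) (s/c) * aDen s ∂volume ∂volume := by
        rw [← lintegral_indicator measurableSet_Ioo]
        apply lintegral_congr
        intro c
        unfold aDen
        by_cases hc : c ∈ Ioo (0:ℝ) 1 <;> simp [hc]
    _ = ∫⁻ c in Ioo (0:ℝ) 1, ∫⁻ x, A.indicator (fun _ => (1:ℝ≥0∞)) x *
          (aDen (c * x) * (ENNReal.ofReal c *
            ENNReal.ofReal (2 / (π * Real.sqrt (1 - c^2))))) ∂volume ∂volume := by
        apply setLIntegral_congr_fun measurableSet_Ioo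
        intro c hc
        beta_reduce
        rw [lintegral_scale (hmeasJ c) hc.1]
        rw [← mul_assoc, ← lintegral_const_mul' _ _
          (by exact ENNReal.mul_ne_top ENNReal.ofReal_ne_top ENNReal.ofReal_ne_top)]
        apply lintegral_congr
        intro y
        have : c * y / c = y := mul_div_cancel_left₀ y (ne_of_gt hc.1)
        rw [this]
        ring
    _ = ∫⁻ x, ∫⁻ c in Ioo (0:ℝ) 1, A.indicator (fun _ => (1:ℝ≥0∞)) x *
          (aDen (c * x) * (ENNReal.ofReal c *
            ENNReal.ofReal (2 / (π * Real.sqrt (1 - c^2))))) ∂volume ∂volume := by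
        apply lintegral_lintegral_swap
        exact (((measurable_const.indicator hA).comp measurable_snd).mul
          ((measurable_aDen.comp (measurable_fst.mul measurable_snd)).mul
            ((ENNReal.measurable_ofReal.comp measurable_fst).mul
              (measurable_g2.comp measurable_fst)))).aemeasurable
    _ = ∫⁻ x, A.indicator (fun _ => (1:ℝ≥0∞)) x * Hd x ∂volume := by
        apply lintegral_congr
        intro x
        unfold Hd
        rw [← lintegral_const_mul' _ _ (indicator_one_ne_top x)]
    _ = ∫⁻ x in A, Hd x ∂volume := by
        rw [← lintegral_indicator hA]
        apply lintegral_congr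
        intro x
        by_cases hx : x ∈ A <;> simp [hx]

instance unif_sfinite' (a b : ℝ) : SFinite (unif a b) := unif_sfinite a b

/-- If θ, α are independent and each uniform on [0,π/2], then X = sin θ / cos α
    has density (2/(π²x))·log|(1+x)/(1−x)| on (0,∞). -/
theorem sin_div_cos_pdf :
    Measure.map (fun p : ℝ × ℝ => Real.sin p.1 / Real.cos p.2)
        ((unif 0 (π / 2)).prod (unif 0 (π / 2))) =
      volume.withDensity (fun x =>
        if 0 < x then ENNReal.ofReal (2 / (π ^ 2 * x) * Real.log |(1 + x) / (1 - x)|)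
        else 0) := by
  have hdiv : Measurable fun q : ℝ × ℝ => q.1 / q.2 := measurable_fst.div measurable_snd
  have hsin : Measure.map Real.sin (unif 0 (π/2)) = volume.withDensity aDen :=
    map_unif_eq Real.measurable_sin (fun θ _ => (Real.hasDerivAt_sin θ).hasDerivWithinAt)
      injOn_sin' sin_image map_sin_unif'
  have hcos : Measure.map Real.cos (unif 0 (π/2)) = volume.withDensity aDen :=
    map_unif_eq Real.measurable_cos (fun θ _ => (Real.hasDerivAt_cos θ).hasDerivWithinAt)
      injOn_cos' cos_image map_cos_unif'
  have hcomp : (fun p : ℝ × ℝ => Real.sin p.1 / Real.cos p.2)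
      = (fun q : ℝ × ℝ => q.1 / q.2) ∘ (Prod.map Real.sin Real.cos) := rfl
  rw [hcomp, ← Measure.map_map hdiv (Real.measurable_sin.prodMap Real.measurable_cos),
    ← Measure.map_prod_map _ _ Real.measurable_sin Real.measurable_cos, hsin, hcos,
    withDensity_prod measurable_aDen measurable_aDen, map_div_eq]
  apply withDensity_congr_ae
  have hone : ∀ᵐ x : ℝ, x ≠ 1 := by
    have h1 : (volume : Measure ℝ) {(1:ℝ)} = 0 := measure_singleton 1
    rw [ae_iff]
    convert h1 using 2
    ext x
    simp
  filter_upwards [hone] with x hx1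
  by_cases hx : 0 < x
  · rw [if_pos hx]
    exact Hd_pos hx hx1
  · rw [if_neg hx]
    exact Hd_nonpos hx
end

section
/- If θ is uniform on [0,2π] and α is uniform on [0,π/2], independent, then W = cos²(θ)/sin²(α) has probability density h(w) = (1/(π²w))·log|(√w+1)/(√w−1)| for w > 0. -/
open MeasureTheory Real Set
open intervalIntegral

lemma cos_set_eq {s : ℝ} (h0 : 0 ≤ s) (h1 : s ≤ 1) :
    {θ : ℝ | θ ∈ Icc 0 (2*π) ∧ cos θ ^ 2 ≤ s ^ 2} =
      Icc (arccos s) (π - arccos s) ∪ Icc (π + arccos s) (2*π - arccos s) := by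
  have hs : -1 ≤ s := by linarith
  have hc : cos (arccos s) = s := Real.cos_arccos hs h1
  have ha0 : 0 ≤ arccos s := Real.arccos_nonneg s
  have hapi : arccos s ≤ π := Real.arccos_le_pi s
  have hapd : arccos s ≤ π/2 := Real.arccos_le_pi_div_two.mpr h0
  ext θ
  simp only [mem_setOf_eq, mem_Icc, mem_union]
  constructor
  · rintro ⟨⟨hθ0, hθ2⟩, hsq⟩
    have habs : |cos θ| ≤ s := by
      exact abs_le_of_sq_le_sq hsq h0
    rw [abs_le] at habs
    by_cases hcase : θ ≤ π
    · left
      constructor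
      · -- arccos s ≤ θ, from cos θ ≤ s
        by_contra hlt
        push_neg at hlt
        have := Real.cos_lt_cos_of_nonneg_of_le_pi hθ0 hapi hlt
        rw [hc] at this; linarith [habs.2]
      · -- θ ≤ π - arccos s, from -s ≤ cos θ
        by_contra hlt
        push_neg at hlt
        have h2 : cos θ < cos (π - arccos s) :=
          Real.cos_lt_cos_of_nonneg_of_le_pi (by linarith) hcase hlt
        rw [Real.cos_pi_sub, hc] at h2; linarith [habs.1]
    · right
      push_neg at hcase
      have h1' : cos (2*π - θ) = cos θ := by
        rw [Real.cos_two_pi_sub]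
      set θ' := 2*π - θ with hθ'
      have hθ'0 : 0 ≤ θ' := by simp [hθ']; linarith
      have hθ'pi : θ' ≤ π := by simp [hθ']; linarith
      have hA : arccos s ≤ θ' := by
        by_contra hlt
        push_neg at hlt
        have := Real.cos_lt_cos_of_nonneg_of_le_pi hθ'0 hapi hlt
        rw [hc, h1'] at this; linarith [habs.2]
      have hB : θ' ≤ π - arccos s := by
        by_contra hlt
        push_neg at hlt
        have h2 : cos θ' < cos (π - arccos s) :=
          Real.cos_lt_cos_of_nonneg_of_le_pi (by linarith) hθ'pi hlt
        rw [Real.cos_pi_sub, hc, h1'] at h2; linarith [habs.1]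
      constructor <;> [skip; skip] <;> simp [hθ'] at hA hB ⊢ <;> linarith
  · rintro (⟨hA, hB⟩ | ⟨hA, hB⟩)
    · refine ⟨⟨by linarith, by linarith [Real.pi_pos]⟩, ?_⟩
      have hu : cos θ ≤ s := by
        rw [← hc]
        exact Real.cos_le_cos_of_nonneg_of_le_pi ha0 (by linarith) hA
      have hl : -s ≤ cos θ := by
        have : cos θ ≥ cos (π - arccos s) :=
          Real.cos_le_cos_of_nonneg_of_le_pi (by linarith) (by linarith) hB
        rwa [Real.cos_pi_sub, hc] at this
      calc cos θ ^ 2 = |cos θ|^2 := (sq_abs _).symm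
        _ ≤ s ^ 2 := by
            apply pow_le_pow_left₀ (abs_nonneg _) (abs_le.mpr ⟨hl, hu⟩)
    · refine ⟨⟨by linarith, by linarith⟩, ?_⟩
      have h1' : cos θ = cos (2*π - θ) := by rw [Real.cos_two_pi_sub]
      set θ' := 2*π - θ with hθ'
      have hA' : arccos s ≤ θ' := by simp [hθ']; linarith
      have hB' : θ' ≤ π - arccos s := by simp [hθ']; linarith
      have hu : cos θ' ≤ s := by
        rw [← hc]
        exact Real.cos_le_cos_of_nonneg_of_le_pi ha0 (by linarith) hA'
      have hl : -s ≤ cos θ' := by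
        have : cos θ' ≥ cos (π - arccos s) :=
          Real.cos_le_cos_of_nonneg_of_le_pi (by linarith) (by linarith) hB'
        rwa [Real.cos_pi_sub, hc] at this
      rw [h1']
      calc cos θ' ^ 2 = |cos θ'|^2 := (sq_abs _).symm
        _ ≤ s ^ 2 := by
            apply pow_le_pow_left₀ (abs_nonneg _) (abs_le.mpr ⟨hl, hu⟩)

lemma vol_cos_set {s : ℝ} (h0 : 0 ≤ s) (h1 : s ≤ 1) :
    volume {θ : ℝ | θ ∈ Icc 0 (2*π) ∧ cos θ ^ 2 ≤ s ^ 2} =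
      ENNReal.ofReal (4 * arcsin s) := by
  rw [cos_set_eq h0 h1]
  have ha0 : 0 ≤ arccos s := Real.arccos_nonneg s
  have hapd : arccos s ≤ π/2 := Real.arccos_le_pi_div_two.mpr h0
  have hinter : volume (Icc (arccos s) (π - arccos s) ∩ Icc (π + arccos s) (2*π - arccos s)) = 0 := by
    have hsub : Icc (arccos s) (π - arccos s) ∩ Icc (π + arccos s) (2*π - arccos s) ⊆
        Icc (π + arccos s) (π - arccos s) := fun x hx => ⟨hx.2.1, hx.1.2⟩
    refine le_antisymm (le_trans (measure_mono hsub) ?_) zero_le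
    rw [Real.volume_Icc]
    simp [ENNReal.ofReal_eq_zero]
    linarith
  rw [measure_union₀ (measurableSet_Icc.nullMeasurableSet) hinter]
  rw [Real.volume_Icc, Real.volume_Icc, ← ENNReal.ofReal_add (by linarith [Real.pi_pos]) (by linarith [Real.pi_pos])]
  congr 1
  rw [Real.arcsin_eq_pi_div_two_sub_arccos]
  ring

lemma vol_cos_div_set {w α : ℝ} (hw : 0 ≤ w) (hα : α ∈ Ioc 0 (π/2)) :
    volume {θ : ℝ | θ ∈ Icc 0 (2*π) ∧ cos θ ^ 2 / sin α ^ 2 ≤ w} =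
      ENNReal.ofReal (4 * arcsin (min (Real.sqrt w * sin α) 1)) := by
  have hsin : 0 < sin α := Real.sin_pos_of_pos_of_lt_pi hα.1
    (lt_of_le_of_lt hα.2 (by linarith [Real.pi_pos]))
  set s := min (Real.sqrt w * sin α) 1 with hs
  have hs0 : 0 ≤ s := le_min (by positivity) zero_le_one
  have hs1 : s ≤ 1 := min_le_right _ _
  have hset : {θ : ℝ | θ ∈ Icc 0 (2*π) ∧ cos θ ^ 2 / sin α ^ 2 ≤ w} =
      {θ : ℝ | θ ∈ Icc 0 (2*π) ∧ cos θ ^ 2 ≤ s ^ 2} := by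
    ext θ
    simp only [mem_setOf_eq, and_congr_right_iff]
    intro _
    rw [div_le_iff₀ (by positivity)]
    have hsq : s ^ 2 = min (w * sin α ^ 2) 1 := by
      rcases min_cases (Real.sqrt w * sin α) 1 with ⟨h, hle⟩ | ⟨h, hlt⟩
      · rw [hs, h, mul_pow, Real.sq_sqrt hw]
        rw [eq_comm, min_eq_left_iff]
        calc w * sin α ^ 2 = (Real.sqrt w * sin α)^2 := by rw [mul_pow, Real.sq_sqrt hw]
          _ ≤ 1 := by nlinarith
      · rw [hs, h, one_pow, eq_comm, min_eq_right_iff]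
        nlinarith [Real.sq_sqrt hw, Real.sqrt_nonneg w]
    rw [hsq]
    constructor
    · intro h; exact le_min h (by nlinarith [Real.abs_cos_le_one θ, abs_nonneg (cos θ), sq_abs (cos θ), abs_le.mp (Real.abs_cos_le_one θ)])
    · intro h; exact le_trans h (min_le_left _ _)
  rw [hset]
  exact vol_cos_set hs0 hs1

lemma measurable_f : Measurable (fun p : ℝ × ℝ => Real.cos p.1 ^ 2 / Real.sin p.2 ^ 2) := by
  fun_prop

lemma lhs_Iic {w : ℝ} (hw : 0 ≤ w) :
    Measure.map (fun p : ℝ × ℝ => Real.cos p.1 ^ 2 / Real.sin p.2 ^ 2)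
        ((unif 0 (2 * π)).prod (unif 0 (π / 2))) (Iic w) =
      (ENNReal.ofReal (2*π))⁻¹ * ((ENNReal.ofReal (π/2))⁻¹ *
        ∫⁻ α in Icc 0 (π/2), ENNReal.ofReal (4 * arcsin (min (Real.sqrt w * sin α) 1))) := by
  haveI : SFinite (unif 0 (2*π)) := by unfold unif; infer_instance
  haveI : SFinite (unif 0 (π/2)) := by unfold unif; infer_instance
  rw [Measure.map_apply measurable_f measurableSet_Iic]
  set S := (fun p : ℝ × ℝ => Real.cos p.1 ^ 2 / Real.sin p.2 ^ 2) ⁻¹' (Iic w) with hS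
  have hSm : MeasurableSet S := measurable_f measurableSet_Iic
  rw [Measure.prod_apply_symm hSm]
  unfold unif
  rw [lintegral_smul_measure]
  simp only [sub_zero, Measure.smul_apply, smul_eq_mul]
  have hc1 : (ENNReal.ofReal (2*π))⁻¹ ≠ ⊤ :=
    ENNReal.inv_ne_top.mpr ((fun h => absurd (ENNReal.ofReal_eq_zero.mp h) (by push_neg; linarith [Real.pi_pos])))
  rw [lintegral_const_mul' _ _ hc1, ← mul_assoc, mul_comm ((ENNReal.ofReal (π/2))⁻¹), mul_assoc]
  congr 1
  congr 1
  have hae : ∀ᵐ α ∂(volume.restrict (Icc (0:ℝ) (π/2))), α ∈ Ioc (0:ℝ) (π/2) := by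
    rw [ae_restrict_iff' measurableSet_Icc]
    filter_upwards [compl_mem_ae_iff.mpr (volume_singleton (a := (0:ℝ)))] with α hα0 hαI
    exact ⟨lt_of_le_of_ne hαI.1 (Ne.symm hα0), hαI.2⟩
  refine lintegral_congr_ae ?_
  filter_upwards [hae] with α hα
  have hsec : (fun θ => (θ, α)) ⁻¹' S = {θ : ℝ | cos θ ^ 2 / sin α ^ 2 ≤ w} := rfl
  rw [hsec, Measure.restrict_apply' measurableSet_Icc]
  have : {θ : ℝ | cos θ ^ 2 / sin α ^ 2 ≤ w} ∩ Icc 0 (2*π)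
      = {θ : ℝ | θ ∈ Icc 0 (2*π) ∧ cos θ ^ 2 / sin α ^ 2 ≤ w} := by
    ext θ; simp [mem_setOf_eq, and_comm]
  rw [this, vol_cos_div_set hw hα]

noncomputable def rf (t α : ℝ) : ℝ := 2/π^2 * (sin α / (Real.sqrt t * Real.sqrt (1 - t * sin α ^ 2)))

noncomputable def Gf (t α : ℝ) : ℝ :=
  -(2/(π^2*t)) * Real.log (Real.sqrt t * cos α + Real.sqrt (1 - t * sin α ^ 2))

lemma hasDerivAt_Gf {t α : ℝ} (ht : 0 < t) (hq : 0 < 1 - t * sin α ^ 2) (hcos : 0 ≤ cos α) :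
    HasDerivAt (Gf t) (rf t α) α := by
  have hpi := Real.pi_pos
  have ha0 : 0 < Real.sqrt t := Real.sqrt_pos.mpr ht
  have hq0 : 0 < Real.sqrt (1 - t * sin α ^ 2) := Real.sqrt_pos.mpr hq
  have hu : 0 < Real.sqrt t * cos α + Real.sqrt (1 - t * sin α ^ 2) := by positivity
  have h1 : HasDerivAt (fun β => 1 - t * sin β ^ 2) (-(t * (2 * sin α ^ 1 * cos α))) α := by
    have := ((Real.hasDerivAt_sin α).pow 2).const_mul t
    simpa using (this.const_sub 1)
  have h2 : HasDerivAt (fun β => Real.sqrt (1 - t * sin β ^ 2))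
      (-(t * (2 * sin α ^ 1 * cos α)) / (2 * Real.sqrt (1 - t * sin α ^ 2))) α :=
    h1.sqrt (ne_of_gt hq)
  have h3 : HasDerivAt (fun β => Real.sqrt t * cos β) (Real.sqrt t * (-sin α)) α :=
    (Real.hasDerivAt_cos α).const_mul (Real.sqrt t)
  have h4 := h3.add h2
  have h5 := h4.log (ne_of_gt hu)
  have h6 := h5.const_mul (-(2/(π^2*t)))
  unfold Gf
  convert h6 using 1
  · rfl
  · rfl
  · rfl
  set a := Real.sqrt t with ha
  set q := Real.sqrt (1 - t * sin α ^ 2) with hqd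
  have ha2 : a ^ 2 = t := Real.sq_sqrt ht.le
  clear_value a q
  have ht' : t = a ^ 2 := ha2.symm
  subst ht'
  unfold rf
  simp only [Pi.add_apply]
  rw [← ha, ← hqd]
  field_simp
  ring

noncomputable def Ff (s t : ℝ) : ℝ := 4/π^2 * arcsin (Real.sqrt t * s)

lemma hasDerivAt_Ff {s t α : ℝ} (ht : 0 < t) (hs : sin α = s) (hs0 : 0 < s)
    (hx1 : Real.sqrt t * s < 1) :
    HasDerivAt (Ff s) (rf t α) t := by
  have hpi := Real.pi_pos
  have ha0 : 0 < Real.sqrt t := Real.sqrt_pos.mpr ht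
  have hx0 : 0 < Real.sqrt t * s := by positivity
  have hg : HasDerivAt (fun u => Real.sqrt u * s) (1 / (2 * Real.sqrt t) * s) t :=
    (Real.hasDerivAt_sqrt ht.ne').mul_const s
  have harc := (Real.hasDerivAt_arcsin (by linarith) (ne_of_lt hx1)).comp t hg
  have h6 := harc.const_mul (4/π^2)
  unfold Ff
  convert h6 using 1
  · rfl
  · rfl
  · rfl
  unfold rf
  rw [← hs] at hx0 hx1 ⊢
  have hq : 1 - (Real.sqrt t * sin α) ^ 2 = 1 - t * sin α ^ 2 := by
    rw [mul_pow, Real.sq_sqrt ht.le]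
  rw [hq]
  have hqpos : 0 < 1 - t * sin α ^ 2 := by
    rw [← hq]; nlinarith
  have hq0 : 0 < Real.sqrt (1 - t * sin α ^ 2) := Real.sqrt_pos.mpr hqpos
  field_simp
  ring

lemma rf_nonneg {t α : ℝ} (hα : 0 ≤ sin α) : 0 ≤ rf t α := by
  have hpi := Real.pi_pos
  unfold rf
  positivity

lemma log_alg {a c : ℝ} (ha : -1 < a) (hne : a ≠ 1) (hc : 0 < c)
    (hprod : c ^ 2 = (a+1)*(a-1) ∨ c ^ 2 = (a+1)*(1-a)) :
    2 * (Real.log (a + 1) - Real.log c) = Real.log ((a + 1) / (a - 1)) := by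
  have ha1 : (0:ℝ) < a + 1 := by linarith
  have hne' : a - 1 ≠ 0 := sub_ne_zero.mpr hne
  have h2 : Real.log (c^2) = 2 * Real.log c := by
    rw [show c^2 = c^(2:ℕ) by norm_num, Real.log_pow]; norm_num
  have hdiv : Real.log ((a + 1) / (a - 1)) = Real.log (a+1) - Real.log (a-1) :=
    Real.log_div ha1.ne' hne'
  rcases hprod with hp | hp
  · have hmul : Real.log (c^2) = Real.log (a+1) + Real.log (a-1) := by
      rw [hp, Real.log_mul ha1.ne' hne']
    linarith
  · have hmul : Real.log (c^2) = Real.log (a+1) + Real.log (1-a) := by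
      rw [hp, Real.log_mul ha1.ne' (by intro h; apply hne; linarith [sub_eq_zero.mp h])]
    have hneg : Real.log (a-1) = Real.log (1-a) := by
      rw [← Real.log_neg_eq_log, neg_sub]
    linarith

lemma integral_rf_alpha_lt {t : ℝ} (ht : 0 < t) (hlt : t < 1) :
    IntegrableOn (rf t) (Icc 0 (π/2)) volume ∧
    ∫ α in Icc 0 (π/2), rf t α = 1/(π^2*t) * Real.log |(Real.sqrt t + 1)/(Real.sqrt t - 1)| := by
  have hpi := Real.pi_pos
  have hq : ∀ α : ℝ, 0 < 1 - t * sin α ^ 2 := by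
    intro α; nlinarith [Real.sin_sq_le_one α]
  have hcont : Continuous (rf t) := by
    apply continuous_const.mul
    apply Continuous.div Real.continuous_sin
    · exact continuous_const.mul (Real.continuous_sqrt.comp (by continuity))
    · intro α
      have := hq α
      positivity
  have hderiv : ∀ α ∈ uIcc 0 (π/2), HasDerivAt (Gf t) (rf t α) α := by
    intro α hα
    rw [uIcc_of_le (by linarith)] at hα
    exact hasDerivAt_Gf ht (hq α) (Real.cos_nonneg_of_mem_Icc ⟨by linarith [hα.1], hα.2⟩)
  have hFTC := intervalIntegral.integral_eq_sub_of_hasDerivAt hderiv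
      (hcont.intervalIntegrable 0 (π/2))
  constructor
  · exact hcont.integrableOn_Icc
  · rw [MeasureTheory.integral_Icc_eq_integral_Ioc, ← intervalIntegral.integral_of_le (by linarith),
      hFTC]
    unfold Gf
    simp only [Real.cos_pi_div_two, Real.sin_pi_div_two, Real.cos_zero, Real.sin_zero]
    rw [mul_zero, zero_add, one_pow, mul_one]
    norm_num
    have hslt : Real.sqrt t < 1 := by
      have := Real.sqrt_lt_sqrt ht.le hlt
      rwa [Real.sqrt_one] at this
    have key := log_alg (a := Real.sqrt t) (c := Real.sqrt (1 - t))
      (by linarith [Real.sqrt_nonneg t]) (ne_of_lt hslt)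
      (Real.sqrt_pos.mpr (by linarith : (0:ℝ) < 1 - t))
      (Or.inr (by rw [Real.sq_sqrt (by linarith : (0:ℝ) ≤ 1 - t)]; nlinarith [Real.sq_sqrt ht.le]))
    rw [← key]
    ring

lemma integral_rf_alpha_gt {t : ℝ} (ht : 1 < t) :
    IntegrableOn (rf t) (Icc 0 (π/2)) volume ∧
    ∫ α in Icc 0 (π/2), rf t α = 1/(π^2*t) * Real.log |(Real.sqrt t + 1)/(Real.sqrt t - 1)| := by
  have hpi := Real.pi_pos
  have ht0 : (0:ℝ) < t := by linarith
  have ha1 : 1 < Real.sqrt t := by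
    have := Real.sqrt_lt_sqrt (by norm_num) ht
    rwa [Real.sqrt_one] at this
  have ha0 : 0 < Real.sqrt t := by linarith
  have hi0 : 0 < (Real.sqrt t)⁻¹ := by positivity
  have hi1 : (Real.sqrt t)⁻¹ < 1 := by
    rw [inv_lt_one_iff₀]; right; exact ha1
  set A := arcsin (Real.sqrt t)⁻¹ with hA
  have hA0 : 0 < A := Real.arcsin_pos.mpr hi0
  have hA2 : A < π/2 := Real.arcsin_lt_pi_div_two.mpr hi1
  have hsinA : sin A = (Real.sqrt t)⁻¹ := Real.sin_arcsin (by linarith) hi1.le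
  have htsinA : t * sin A ^ 2 = 1 := by
    rw [hsinA, inv_pow, Real.sq_sqrt ht0.le]
    field_simp
  -- on [A, π/2], rf t = 0
  have hzero : ∀ α ∈ Icc A (π/2), rf t α = 0 := by
    intro α hα
    obtain ⟨hα1, hα2⟩ := hα
    have hsin : sin A ≤ sin α := by
      exact Real.strictMonoOn_sin.monotoneOn (a := A) (b := α)
        ⟨by linarith, by linarith⟩ ⟨by linarith, hα2⟩ hα1
    have hsq : sin A ^ 2 ≤ sin α ^ 2 := by nlinarith [hi0, hsinA]
    have hle : 1 - t * sin α ^ 2 ≤ 0 := by nlinarith [htsinA]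
    have hs0 : Real.sqrt (1 - t * sin α ^ 2) = 0 := by
      rw [Real.sqrt_eq_zero']
      exact hle
    unfold rf
    rw [hs0, mul_zero, div_zero, mul_zero]
  -- derivative on (0, A)
  have hderiv : ∀ α ∈ Ioo 0 A, HasDerivAt (Gf t) (rf t α) α := by
    intro α hα
    obtain ⟨hα1, hα2⟩ := hα
    have hαpi : α < π/2 := lt_trans hα2 hA2
    have hsinlt : sin α < sin A := by
      apply Real.strictMonoOn_sin ⟨by linarith, by linarith⟩ ⟨by linarith, hA2.le⟩ hα2
    have hsin0 : 0 ≤ sin α := Real.sin_nonneg_of_nonneg_of_le_pi hα1.le (by linarith)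
    have hqpos : 0 < 1 - t * sin α ^ 2 := by nlinarith [hsinA, htsinA]
    exact hasDerivAt_Gf ht0 hqpos (Real.cos_nonneg_of_mem_Icc ⟨by linarith, hαpi.le⟩)
  -- continuity of Gf t on [0, A]
  have hcosA : 0 < cos A := Real.cos_pos_of_mem_Ioo ⟨by linarith, hA2⟩
  have hGcont : ContinuousOn (Gf t) (Icc 0 A) := by
    apply ContinuousOn.mul continuousOn_const
    apply ContinuousOn.log
    · apply ContinuousOn.add
      · exact (continuous_const.mul Real.continuous_cos).continuousOn
      · exact (Real.continuous_sqrt.comp (by continuity)).continuousOn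
    · intro α hα
      obtain ⟨hα1, hα2⟩ := hα
      have hcos : cos A ≤ cos α := by
        apply Real.cos_le_cos_of_nonneg_of_le_pi hα1 (by linarith) hα2
      have : 0 < Real.sqrt t * cos α := by nlinarith
      have h2 : 0 ≤ Real.sqrt (1 - t * sin α ^ 2) := Real.sqrt_nonneg _
      positivity
  -- nonneg on Ioo 0 A
  have hnn : ∀ α ∈ Ioo 0 A, 0 ≤ rf t α := by
    intro α hα
    obtain ⟨h1, h2⟩ := hα
    exact rf_nonneg (Real.sin_nonneg_of_nonneg_of_le_pi h1.le (by linarith))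
  -- integrability on [0, A]
  have hint : IntervalIntegrable (rf t) volume 0 A := by
    apply intervalIntegrable_deriv_of_nonneg
    · rwa [uIcc_of_le hA0.le]
    · simpa [min_eq_left hA0.le, max_eq_right hA0.le] using hderiv
    · simpa [min_eq_left hA0.le, max_eq_right hA0.le] using hnn
  -- FTC on [0, A]
  have hFTC : ∫ α in (0:ℝ)..A, rf t α = Gf t A - Gf t 0 :=
    intervalIntegral.integral_eq_sub_of_hasDeriv_right_of_le hA0.le hGcont
      (fun α hα => (hderiv α hα).hasDerivWithinAt) hint
  -- second piece integrable and zero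
  have hint2 : IntervalIntegrable (rf t) volume A (π/2) := by
    rw [intervalIntegrable_iff_integrableOn_Icc_of_le hA2.le]
    exact (integrableOn_zero).congr_fun (fun α hα => (hzero α hα).symm) measurableSet_Icc
  have hzero2 : ∫ α in A..(π/2), rf t α = 0 := by
    rw [intervalIntegral.integral_congr (g := fun _ => (0:ℝ))
      (fun α hα => hzero α (by rwa [uIcc_of_le hA2.le] at hα))]
    simp
  have htotal : IntervalIntegrable (rf t) volume 0 (π/2) := hint.trans hint2
  constructor
  · rwa [← intervalIntegrable_iff_integrableOn_Icc_of_le (by linarith)]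
  · rw [MeasureTheory.integral_Icc_eq_integral_Ioc, ← intervalIntegral.integral_of_le (by linarith),
      ← intervalIntegral.integral_add_adjacent_intervals hint hint2, hFTC, hzero2, add_zero]
    -- evaluate
    have hGA : Gf t A = -(2/(π^2*t)) * Real.log (Real.sqrt (t - 1)) := by
      unfold Gf
      congr 2
      rw [show 1 - t * sin A ^ 2 = 0 by rw [htsinA]; ring, Real.sqrt_zero, add_zero]
      rw [Real.cos_arcsin]
      rw [← Real.sqrt_mul ht0.le]
      congr 1
      rw [inv_pow, Real.sq_sqrt ht0.le]
      field_simp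
    have hG0 : Gf t 0 = -(2/(π^2*t)) * Real.log (Real.sqrt t + 1) := by
      unfold Gf
      norm_num
    rw [hGA, hG0, Real.log_abs]
    have key := log_alg (a := Real.sqrt t) (c := Real.sqrt (t - 1))
      (by linarith) (ne_of_gt ha1)
      (Real.sqrt_pos.mpr (by linarith : (0:ℝ) < t - 1))
      (Or.inl (by rw [Real.sq_sqrt (by linarith : (0:ℝ) ≤ t - 1)]; nlinarith [Real.sq_sqrt ht0.le]))
    rw [← key]
    ring

lemma lintegral_rf_t_aux {b s α : ℝ} (hb : 0 < b) (hs : sin α = s) (hs0 : 0 < s)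
    (hlt : ∀ t ∈ Ioo 0 b, t * s^2 < 1) :
    ∫⁻ t in Ioo 0 b, ENNReal.ofReal (rf t α) =
      ENNReal.ofReal (4/π^2 * arcsin (Real.sqrt b * s)) := by
  have hpi := Real.pi_pos
  have hsqrt1 : ∀ t ∈ Ioo 0 b, Real.sqrt t * s < 1 := by
    intro t htm
    have h1 := hlt t htm
    nlinarith [Real.sq_sqrt htm.1.le, Real.sqrt_nonneg t]
  have hderiv : ∀ t ∈ Ioo 0 b, HasDerivAt (Ff s) (rf t α) t :=
    fun t htm => hasDerivAt_Ff htm.1 hs hs0 (hsqrt1 t htm)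
  have hFcont : Continuous (Ff s) :=
    continuous_const.mul (Real.continuous_arcsin.comp (Real.continuous_sqrt.mul continuous_const))
  have hnn : ∀ t : ℝ, 0 ≤ rf t α := fun t => rf_nonneg (hs ▸ hs0.le)
  have hint : IntervalIntegrable (fun t => rf t α) volume 0 b := by
    apply intervalIntegrable_deriv_of_nonneg (g := Ff s)
    · exact hFcont.continuousOn
    · simpa [min_eq_left hb.le, max_eq_right hb.le] using hderiv
    · intro t _; exact hnn t
  have hFTC : ∫ t in (0:ℝ)..b, rf t α = Ff s b - Ff s 0 :=
    intervalIntegral.integral_eq_sub_of_hasDeriv_right_of_le hb.le hFcont.continuousOn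
      (fun t htm => (hderiv t htm).hasDerivWithinAt) hint
  have hintOn : IntegrableOn (fun t => rf t α) (Ioo 0 b) volume := by
    have := (intervalIntegrable_iff_integrableOn_Icc_of_le hb.le).mp hint
    exact this.mono_set Ioo_subset_Icc_self
  rw [← ofReal_integral_eq_lintegral_ofReal hintOn (ae_of_all _ (fun t => hnn t))]
  congr 1
  rw [← MeasureTheory.integral_Ioc_eq_integral_Ioo, ← intervalIntegral.integral_of_le hb.le, hFTC]
  unfold Ff
  simp [Real.sqrt_zero]

lemma lintegral_rf_t {w α : ℝ} (hw : 0 ≤ w) (hα : α ∈ Ioo 0 (π/2)) :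
    ∫⁻ t in Ioo 0 w, ENNReal.ofReal (rf t α) =
      ENNReal.ofReal (4/π^2 * arcsin (min (Real.sqrt w * sin α) 1)) := by
  have hpi := Real.pi_pos
  have hs0 : 0 < sin α := Real.sin_pos_of_pos_of_lt_pi hα.1 (by linarith [hα.2])
  rcases eq_or_lt_of_le hw with hw0 | hwpos
  · simp [← hw0, Real.sqrt_zero]
  by_cases hcase : w * sin α ^ 2 ≤ 1
  · have := lintegral_rf_t_aux hwpos rfl hs0
      (fun t htm => by nlinarith [htm.1, htm.2, sq_nonneg (sin α)])
    rw [this]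
    congr 2
    rw [min_eq_left]
    nlinarith [Real.sq_sqrt hw, Real.sqrt_nonneg w]
  · push_neg at hcase
    set m := (sin α ^ 2)⁻¹ with hm
    have hm0 : 0 < m := by positivity
    have hmw : m < w := by
      rw [hm, inv_lt_iff_one_lt_mul₀ (by positivity)]
      linarith [hcase]
    have hsplit : Ioo (0:ℝ) w = Ioo 0 m ∪ Ico m w := by
      ext t
      simp only [mem_Ioo, mem_Ico, mem_union]
      constructor
      · rintro ⟨h1, h2⟩
        rcases lt_or_ge t m with h | h
        · exact Or.inl ⟨h1, h⟩
        · exact Or.inr ⟨h, h2⟩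
      · rintro (⟨h1, h2⟩ | ⟨h1, h2⟩)
        · exact ⟨h1, by linarith⟩
        · exact ⟨by linarith, h2⟩
    rw [hsplit, lintegral_union measurableSet_Ico
      (by rw [Set.disjoint_iff]; rintro t ⟨⟨_, h1⟩, ⟨h2, _⟩⟩; exact absurd h1 (not_lt.mpr h2))]
    have hzero : ∫⁻ t in Ico m w, ENNReal.ofReal (rf t α) = 0 := by
      rw [setLIntegral_congr_fun measurableSet_Ico ?_]
      · exact lintegral_zero
      · intro t htm
        have h1 : 1 - t * sin α ^ 2 ≤ 0 := by
          have : 1 ≤ t * sin α ^ 2 := by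
            rw [hm] at htm
            have := htm.1
            rw [inv_le_iff_one_le_mul₀ (by positivity)] at this
            linarith [this]
          linarith
        have hz : Real.sqrt (1 - t * sin α ^ 2) = 0 := Real.sqrt_eq_zero'.mpr h1
        show ENNReal.ofReal (rf t α) = 0
        unfold rf
        rw [hz, mul_zero, div_zero, mul_zero, ENNReal.ofReal_zero]
    rw [hzero, add_zero]
    have := lintegral_rf_t_aux hm0 rfl hs0
      (fun t htm => by
        have h2 := htm.2
        rw [hm] at h2
        have : t * sin α ^ 2 < (sin α ^ 2)⁻¹ * sin α ^ 2 := by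
          apply mul_lt_mul_of_pos_right h2 (by positivity)
        rwa [inv_mul_cancel₀ (by positivity)] at this)
    rw [this]
    congr 2
    have h1 : Real.sqrt m * sin α = 1 := by
      rw [hm, Real.sqrt_inv, Real.sqrt_sq hs0.le, inv_mul_cancel₀ hs0.ne']
    have h2 : min (Real.sqrt w * sin α) 1 = 1 := by
      rw [min_eq_right]
      nlinarith [Real.sq_sqrt hw, Real.sqrt_nonneg w, hcase, hs0, mul_pos (Real.sqrt_pos.mpr hwpos) hs0, sq_nonneg (Real.sqrt w * sin α - 1), sq_nonneg (Real.sqrt w * sin α + 1)]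
    rw [h1, h2]

lemma lintegral_rf_alpha {t : ℝ} (ht : 0 < t) (hne : t ≠ 1) :
    ∫⁻ α in Icc 0 (π/2), ENNReal.ofReal (rf t α) =
      ENNReal.ofReal (1/(π^2*t) * Real.log |(Real.sqrt t + 1)/(Real.sqrt t - 1)|) := by
  obtain ⟨hint, hval⟩ := hne.lt_or_gt.elim (fun h => integral_rf_alpha_lt ht h)
    (fun h => integral_rf_alpha_gt h)
  rw [← hval, ← ofReal_integral_eq_lintegral_ofReal hint]
  filter_upwards [ae_restrict_mem measurableSet_Icc] with α hα
  exact rf_nonneg (Real.sin_nonneg_of_nonneg_of_le_pi hα.1 (by linarith [hα.2, Real.pi_pos]))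

lemma measurable_rf : Measurable (fun z : ℝ × ℝ => ENNReal.ofReal (rf z.1 z.2)) := by
  apply ENNReal.measurable_ofReal.comp
  unfold rf
  fun_prop

lemma rhs_Iic {w : ℝ} (hw : 0 ≤ w) :
    volume.withDensity (fun w =>
        if 0 < w then
          ENNReal.ofReal (1 / (π ^ 2 * w) *
            Real.log |(Real.sqrt w + 1) / (Real.sqrt w - 1)|)
        else 0) (Iic w) =
      (ENNReal.ofReal (2*π))⁻¹ * ((ENNReal.ofReal (π/2))⁻¹ *
        ∫⁻ α in Icc 0 (π/2), ENNReal.ofReal (4 * arcsin (min (Real.sqrt w * sin α) 1))) := by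
  have hpi := Real.pi_pos
  rw [withDensity_apply _ measurableSet_Iic]
  rw [show Iic w = Iic 0 ∪ Ioc 0 w from (Iic_union_Ioc_eq_Iic hw).symm]
  rw [lintegral_union measurableSet_Ioc
    (by rw [Set.disjoint_iff]; rintro t ⟨h1, h2, _⟩; exact absurd (lt_of_lt_of_le h2 h1) (lt_irrefl 0))]
  have hz : ∫⁻ t in Iic 0, (fun w =>
      if 0 < w then ENNReal.ofReal (1 / (π ^ 2 * w) *
        Real.log |(Real.sqrt w + 1) / (Real.sqrt w - 1)|) else 0) t = 0 := by
    rw [setLIntegral_congr_fun measurableSet_Iic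
      (fun t (htm : t ∈ Iic 0) => if_neg (by simp at htm ⊢; linarith [htm]))]
    exact lintegral_zero
  rw [hz, zero_add]
  rw [setLIntegral_congr (Ioo_ae_eq_Ioc (a := (0:ℝ)) (b := w)).symm]
  rw [setLIntegral_congr_fun measurableSet_Ioo
    (fun t (htm : t ∈ Ioo 0 w) => if_pos htm.1)]
  -- replace by the double integral
  have h1ae : ∀ᵐ t ∂(volume.restrict (Ioo 0 w)), t ≠ 1 := by
    rw [ae_iff]
    have hsub : {t : ℝ | ¬ t ≠ 1} ⊆ ({1} : Set ℝ) := by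
      intro t htm; simp at htm; simp [htm]
    refine le_antisymm ?_ zero_le
    calc (volume.restrict (Ioo 0 w)) {t : ℝ | ¬ t ≠ 1}
        ≤ (volume.restrict (Ioo 0 w)) ({1} : Set ℝ) := measure_mono hsub
      _ ≤ volume ({1} : Set ℝ) := Measure.restrict_le_self _
      _ = 0 := Real.volume_singleton
  rw [lintegral_congr_ae (g := fun t => ∫⁻ α in Icc 0 (π/2), ENNReal.ofReal (rf t α)) ?_]
  swap
  · filter_upwards [ae_restrict_mem measurableSet_Ioo, h1ae] with t htm hne
    exact (lintegral_rf_alpha htm.1 hne).symm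
  rw [lintegral_lintegral_swap (measurable_rf.aemeasurable)]
  have h2ae : ∀ᵐ α ∂(volume.restrict (Icc 0 (π/2))), α ∈ Ioo 0 (π/2) := by
    rw [ae_restrict_iff' measurableSet_Icc]
    have hnull : volume ({0, π/2} : Set ℝ) = 0 :=
      (Set.Countable.insert _ (countable_singleton _)).measure_zero volume
    filter_upwards [compl_mem_ae_iff.mpr hnull] with α hα hIcc
    simp only [mem_compl_iff, mem_insert_iff, mem_singleton_iff, not_or] at hα
    exact ⟨lt_of_le_of_ne hIcc.1 (Ne.symm hα.1), lt_of_le_of_ne hIcc.2 hα.2⟩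
  rw [lintegral_congr_ae (g := fun α => ENNReal.ofReal (4/π^2 * arcsin (min (Real.sqrt w * sin α) 1))) ?_]
  swap
  · filter_upwards [h2ae] with α hα
    exact lintegral_rf_t hw hα
  rw [← lintegral_const_mul' _ _ (by simp [Real.pi_pos] : ((ENNReal.ofReal (π/2))⁻¹ ≠ ⊤)),
    ← lintegral_const_mul' _ _ (by simp [Real.pi_pos] : ((ENNReal.ofReal (2*π))⁻¹ ≠ ⊤))]
  apply lintegral_congr
  intro α
  rw [← ENNReal.ofReal_inv_of_pos (by linarith : (0:ℝ) < 2*π),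
      ← ENNReal.ofReal_inv_of_pos (by linarith : (0:ℝ) < π/2),
      ← ENNReal.ofReal_mul (by positivity), ← ENNReal.ofReal_mul (by positivity)]
  congr 1
  field_simp

lemma unif_finite {a b : ℝ} (h : a < b) : IsFiniteMeasure (unif a b) := by
  unfold unif
  constructor
  simp only [Measure.smul_apply, smul_eq_mul, Measure.restrict_apply MeasurableSet.univ,
    Set.univ_inter, Real.volume_Icc]
  refine ENNReal.mul_lt_top ?_ ENNReal.ofReal_lt_top
  exact (ENNReal.inv_ne_top.mpr (fun hc => absurd (ENNReal.ofReal_eq_zero.mp hc)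
    (by push_neg; linarith))).lt_top

/-- If θ is uniform on [0,2π] and α is uniform on [0,π/2], independent, then
    W = cos²θ/sin²α has density (1/(π²w))·log|(√w+1)/(√w−1)| on (0,∞). -/
theorem cos_sq_div_sin_sq_pdf :
    Measure.map (fun p : ℝ × ℝ => Real.cos p.1 ^ 2 / Real.sin p.2 ^ 2)
        ((unif 0 (2 * π)).prod (unif 0 (π / 2))) =
      volume.withDensity (fun w =>
        if 0 < w then
          ENNReal.ofReal (1 / (π ^ 2 * w) *
            Real.log |(Real.sqrt w + 1) / (Real.sqrt w - 1)|)
        else 0) := by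
  have hpi := Real.pi_pos
  haveI h1 : IsFiniteMeasure (unif 0 (2 * π)) := unif_finite (by linarith)
  haveI h2 : IsFiniteMeasure (unif 0 (π / 2)) := unif_finite (by linarith)
  haveI h4 : IsFiniteMeasure (Measure.map (fun p : ℝ × ℝ => Real.cos p.1 ^ 2 / Real.sin p.2 ^ 2)
      ((unif 0 (2 * π)).prod (unif 0 (π / 2)))) := by
    constructor
    rw [Measure.map_apply measurable_f MeasurableSet.univ, preimage_univ]
    exact measure_lt_top _ _
  refine Measure.ext_of_Iic _ _ (fun a => ?_)
  rcases le_or_gt 0 a with ha | ha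
  · rw [lhs_Iic ha, rhs_Iic ha]
  · rw [Measure.map_apply measurable_f measurableSet_Iic]
    have hempty : (fun p : ℝ × ℝ => Real.cos p.1 ^ 2 / Real.sin p.2 ^ 2) ⁻¹' (Iic a) = ∅ := by
      ext p
      simp only [mem_preimage, mem_Iic, mem_empty_iff_false, iff_false, not_le]
      exact lt_of_lt_of_le ha (div_nonneg (sq_nonneg _) (sq_nonneg _))
    rw [hempty, measure_empty, withDensity_apply _ measurableSet_Iic]
    rw [setLIntegral_congr_fun measurableSet_Iic
      (fun t (htm : t ∈ Iic a) => if_neg (by simp at htm; push_neg; linarith))]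
    exact lintegral_zero.symm
end
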